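/- Let X ~ N(μ, σ²) and Y ~ N(μ', σ²) with |μ − μ'| = w. Then for any measurable set S, P(X ∈ S) ≤ e^ε · P(Y ∈ S) + δ whenever σ² ≥ 2w²·(ln(1/(2δ)) + ε)/ε² and δ ∈ (0, 1/2). -/

import Mathlib

open MeasureTheory ProbabilityTheory NNReal Real

lemma gauss_sym (m : ℝ) {v : ℝ≥0} (hv : v ≠ 0) :
    gaussianReal m v (Set.Iio m) = gaussianReal m v (Set.Ioi m) := by
  have h1 : ((-1:ℝ)*m) + 2*m = m := by ring
  have hone : (NNReal.mk ((-1:ℝ)^2) (sq_nonneg _)) = 1 := by ext; norm_num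
  have hmap : (gaussianReal m v).map (fun x => (-1:ℝ) * x + 2*m) = gaussianReal m v := by
    have := gaussianReal_map_const_mul (μ := m) (v := v) (-1 : ℝ)
    rw [hone, one_mul] at this
    have h2 := gaussianReal_map_add_const (μ := (-1:ℝ)*m) (v := v) (2*m)
    rw [h1] at h2
    calc (gaussianReal m v).map (fun x => (-1:ℝ) * x + 2*m)
        = ((gaussianReal m v).map (fun x => (-1:ℝ) * x)).map (fun x => x + 2*m) :=
          (Measure.map_map (g := fun x => x + 2*m) (f := fun x => (-1:ℝ)*x) (by fun_prop) (by fun_prop)).symm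
      _ = (gaussianReal ((-1:ℝ)*m) v).map (· + 2*m) := by rw [this]
      _ = gaussianReal m v := h2
  have := Measure.map_apply (μ := gaussianReal m v)
    (f := fun x => (-1:ℝ) * x + 2*m) (by fun_prop) (measurableSet_Ioi (a := m))
  rw [hmap] at this
  rw [this]
  congr 1
  ext x
  simp only [Set.mem_preimage, Set.mem_Ioi, Set.mem_Iio]
  constructor <;> intro h <;> linarith

lemma gauss_Ioi_half (m : ℝ) {v : ℝ≥0} (hv : v ≠ 0) :
    gaussianReal m v (Set.Ioi m) = 1/2 := by
  have hsing : gaussianReal m v {m} = 0 :=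
    gaussianReal_absolutelyContinuous m hv (Real.volume_singleton)
  have hIci : gaussianReal m v (Set.Ici m) = gaussianReal m v (Set.Ioi m) := by
    refine le_antisymm ?_ (measure_mono Set.Ioi_subset_Ici_self)
    calc gaussianReal m v (Set.Ici m) = gaussianReal m v ({m} ∪ Set.Ioi m) := by
          rw [Set.singleton_union, Set.Ioi_insert]
      _ ≤ gaussianReal m v {m} + gaussianReal m v (Set.Ioi m) := measure_union_le _ _
      _ = gaussianReal m v (Set.Ioi m) := by rw [hsing, zero_add]
  have huniv : gaussianReal m v Set.univ = 1 := measure_univ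
  rw [← Set.Iio_union_Ici (a := m)] at huniv
  rw [measure_union (Set.Iio_disjoint_Ici le_rfl) measurableSet_Ici, hIci, gauss_sym m hv] at huniv
  have hfin : gaussianReal m v (Set.Ioi m) ≠ ⊤ := measure_ne_top _ _
  have h2 : 2 * gaussianReal m v (Set.Ioi m) = 1 := by rw [two_mul]; exact huniv
  rw [ENNReal.eq_div_iff (by norm_num) (by norm_num)]
  exact h2

lemma pdf_shift_le (m a σ : ℝ) (hσ : 0 < σ) (ha : 0 ≤ a) {x : ℝ} (hx : m + a ≤ x) :
    gaussianPDFReal m ⟨σ^2, sq_nonneg σ⟩ x ≤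
      Real.exp (-(a^2)/(2*σ^2)) * gaussianPDFReal (m+a) ⟨σ^2, sq_nonneg σ⟩ x := by
  simp only [gaussianPDFReal, NNReal.coe_mk]
  have h1 : Real.exp (-(x-m)^2/(2*σ^2)) ≤
      Real.exp (-(a^2)/(2*σ^2)) * Real.exp (-(x-(m+a))^2/(2*σ^2)) := by
    rw [← Real.exp_add]
    apply Real.exp_le_exp.mpr
    rw [← add_div, div_le_div_iff_of_pos_right (by positivity)]
    nlinarith [mul_nonneg ha (sub_nonneg.mpr hx)]
  calc (Real.sqrt (2*π*σ^2))⁻¹ * Real.exp (-(x-m)^2/(2*σ^2))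
      ≤ (Real.sqrt (2*π*σ^2))⁻¹ *
        (Real.exp (-(a^2)/(2*σ^2)) * Real.exp (-(x-(m+a))^2/(2*σ^2))) :=
        mul_le_mul_of_nonneg_left h1 (by positivity)
    _ = Real.exp (-(a^2)/(2*σ^2)) *
        ((Real.sqrt (2*π*σ^2))⁻¹ * Real.exp (-(x-(m+a))^2/(2*σ^2))) := by ring

lemma pdf_shift_le' (m a σ : ℝ) (hσ : 0 < σ) (ha : 0 ≤ a) {x : ℝ} (hx : x ≤ m - a) :
    gaussianPDFReal m ⟨σ^2, sq_nonneg σ⟩ x ≤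
      Real.exp (-(a^2)/(2*σ^2)) * gaussianPDFReal (m-a) ⟨σ^2, sq_nonneg σ⟩ x := by
  simp only [gaussianPDFReal, NNReal.coe_mk]
  have h1 : Real.exp (-(x-m)^2/(2*σ^2)) ≤
      Real.exp (-(a^2)/(2*σ^2)) * Real.exp (-(x-(m-a))^2/(2*σ^2)) := by
    rw [← Real.exp_add]
    apply Real.exp_le_exp.mpr
    rw [← add_div, div_le_div_iff_of_pos_right (by positivity)]
    nlinarith [mul_nonneg ha (sub_nonneg.mpr hx)]
  calc (Real.sqrt (2*π*σ^2))⁻¹ * Real.exp (-(x-m)^2/(2*σ^2))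
      ≤ (Real.sqrt (2*π*σ^2))⁻¹ *
        (Real.exp (-(a^2)/(2*σ^2)) * Real.exp (-(x-(m-a))^2/(2*σ^2))) :=
        mul_le_mul_of_nonneg_left h1 (by positivity)
    _ = Real.exp (-(a^2)/(2*σ^2)) *
        ((Real.sqrt (2*π*σ^2))⁻¹ * Real.exp (-(x-(m-a))^2/(2*σ^2))) := by ring

lemma vne {σ : ℝ} (hσ : 0 < σ) : (⟨σ^2, sq_nonneg σ⟩ : ℝ≥0) ≠ 0 := by
  intro h
  have h2 : σ^2 = (0:ℝ) := congrArg NNReal.toReal h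
  nlinarith

lemma gauss_tail_Ioi (m a σ : ℝ) (hσ : 0 < σ) (ha : 0 ≤ a)
    (hhalf : gaussianReal (m+a) ⟨σ^2, sq_nonneg σ⟩ (Set.Ioi (m+a)) = 1/2) :
    gaussianReal m ⟨σ^2, sq_nonneg σ⟩ (Set.Ioi (m+a)) ≤
      ENNReal.ofReal (Real.exp (-(a^2)/(2*σ^2)) / 2) := by
  have hv := vne hσ
  set E : ℝ := Real.exp (-(a^2)/(2*σ^2)) with hE
  calc gaussianReal m ⟨σ^2, sq_nonneg σ⟩ (Set.Ioi (m+a))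
      = ∫⁻ x in Set.Ioi (m+a), gaussianPDF m ⟨σ^2, sq_nonneg σ⟩ x :=
        gaussianReal_apply m hv _
    _ ≤ ∫⁻ x in Set.Ioi (m+a),
          ENNReal.ofReal E * gaussianPDF (m+a) ⟨σ^2, sq_nonneg σ⟩ x := by
        refine setLIntegral_mono ((measurable_gaussianPDF _ _).const_mul _) ?_
        intro x hx
        simp only [gaussianPDF]; rw [← ENNReal.ofReal_mul (Real.exp_pos _).le]
        exact ENNReal.ofReal_le_ofReal (pdf_shift_le m a σ hσ ha (le_of_lt hx))
    _ = ENNReal.ofReal E * ∫⁻ x in Set.Ioi (m+a), gaussianPDF (m+a) ⟨σ^2, sq_nonneg σ⟩ x :=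
        lintegral_const_mul _ (measurable_gaussianPDF _ _)
    _ = ENNReal.ofReal E * gaussianReal (m+a) ⟨σ^2, sq_nonneg σ⟩ (Set.Ioi (m+a)) := by
        rw [gaussianReal_apply _ hv]
    _ = ENNReal.ofReal E * ENNReal.ofReal (1/2) := by
        rw [hhalf]
        congr 1
        rw [ENNReal.ofReal_div_of_pos two_pos, ENNReal.ofReal_one, ENNReal.ofReal_ofNat]
    _ = ENNReal.ofReal (E / 2) := by
        rw [← ENNReal.ofReal_mul (Real.exp_pos _).le]; congr 1; ring

lemma gauss_tail_Iio (m a σ : ℝ) (hσ : 0 < σ) (ha : 0 ≤ a)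
    (hhalf : gaussianReal (m-a) ⟨σ^2, sq_nonneg σ⟩ (Set.Iio (m-a)) = 1/2) :
    gaussianReal m ⟨σ^2, sq_nonneg σ⟩ (Set.Iio (m-a)) ≤
      ENNReal.ofReal (Real.exp (-(a^2)/(2*σ^2)) / 2) := by
  have hv := vne hσ
  set E : ℝ := Real.exp (-(a^2)/(2*σ^2)) with hE
  calc gaussianReal m ⟨σ^2, sq_nonneg σ⟩ (Set.Iio (m-a))
      = ∫⁻ x in Set.Iio (m-a), gaussianPDF m ⟨σ^2, sq_nonneg σ⟩ x :=
        gaussianReal_apply m hv _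
    _ ≤ ∫⁻ x in Set.Iio (m-a),
          ENNReal.ofReal E * gaussianPDF (m-a) ⟨σ^2, sq_nonneg σ⟩ x := by
        refine setLIntegral_mono ((measurable_gaussianPDF _ _).const_mul _) ?_
        intro x hx
        simp only [gaussianPDF]; rw [← ENNReal.ofReal_mul (Real.exp_pos _).le]
        exact ENNReal.ofReal_le_ofReal (pdf_shift_le' m a σ hσ ha (le_of_lt hx))
    _ = ENNReal.ofReal E * ∫⁻ x in Set.Iio (m-a), gaussianPDF (m-a) ⟨σ^2, sq_nonneg σ⟩ x :=
        lintegral_const_mul _ (measurable_gaussianPDF _ _)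
    _ = ENNReal.ofReal E * gaussianReal (m-a) ⟨σ^2, sq_nonneg σ⟩ (Set.Iio (m-a)) := by
        rw [gaussianReal_apply _ hv]
    _ = ENNReal.ofReal E * ENNReal.ofReal (1/2) := by
        rw [hhalf]
        congr 1
        rw [ENNReal.ofReal_div_of_pos two_pos, ENNReal.ofReal_one, ENNReal.ofReal_ofNat]
    _ = ENNReal.ofReal (E / 2) := by
        rw [← ENNReal.ofReal_mul (Real.exp_pos _).le]; congr 1; ring

set_option maxHeartbeats 1000000 in
theorem gaussian_indistinguishability (μ μ' w σ ε δ : ℝ) (hσ : 0 < σ)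
    (hw : |μ - μ'| = w) (hε : 0 < ε) (hδ : δ ∈ Set.Ioo (0:ℝ) (1/2))
    (hvar : σ ^ 2 ≥ 2 * w ^ 2 * (Real.log (1 / (2 * δ)) + ε) / ε ^ 2)
    (S : Set ℝ) (hS : MeasurableSet S) :
    gaussianReal μ ⟨σ ^ 2, sq_nonneg σ⟩ S ≤
      ENNReal.ofReal (Real.exp ε) * gaussianReal μ' ⟨σ ^ 2, sq_nonneg σ⟩ S +
        ENNReal.ofReal δ := by
  obtain ⟨hδ0, hδhalf⟩ := hδ
  have hv : (⟨σ ^ 2, sq_nonneg σ⟩ : ℝ≥0) ≠ 0 := vne hσ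
  have hw0 : 0 ≤ w := hw ▸ abs_nonneg _
  by_cases hw' : w = 0
  · have hμ : μ = μ' := by
      have h0 : |μ - μ'| = 0 := by rw [hw, hw']
      have := abs_eq_zero.mp h0
      linarith
    calc gaussianReal μ ⟨σ ^ 2, sq_nonneg σ⟩ S
        = 1 * gaussianReal μ' ⟨σ ^ 2, sq_nonneg σ⟩ S := by rw [hμ, one_mul]
      _ ≤ ENNReal.ofReal (Real.exp ε) * gaussianReal μ' ⟨σ ^ 2, sq_nonneg σ⟩ S := by
          gcongr
          exact ENNReal.one_le_ofReal.mpr (Real.one_le_exp hε.le)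
      _ ≤ _ := le_self_add
  have hwpos : 0 < w := lt_of_le_of_ne hw0 (Ne.symm hw')
  set L := Real.log (1 / (2 * δ)) with hL
  have hLpos : 0 < L := by
    apply Real.log_pos
    rw [lt_div_iff₀ (by linarith)]
    linarith
  have hσ2pos : (0:ℝ) < σ ^ 2 := by positivity
  have hvar' : 2 * w ^ 2 * (L + ε) ≤ σ ^ 2 * ε ^ 2 := by
    rw [ge_iff_le, div_le_iff₀ (by positivity)] at hvar
    linarith
  set c : ℝ := σ ^ 2 * ε - w ^ 2 / 2 with hc_def
  have hc0 : 0 ≤ c := by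
    rw [hc_def]
    nlinarith [mul_nonneg (mul_nonneg (by norm_num : (0:ℝ) ≤ 2) (sq_nonneg w)) hLpos.le,
      sq_nonneg w, mul_pos hwpos hwpos]
  set a : ℝ := c / w with ha_def
  have ha0 : 0 ≤ a := div_nonneg hc0 hwpos.le
  have hexp : Real.exp (-(a ^ 2) / (2 * σ ^ 2)) / 2 ≤ δ := by
    have h1 : L ≤ a ^ 2 / (2 * σ ^ 2) := by
      rw [le_div_iff₀ (by positivity), ha_def, div_pow, hc_def]
      rw [le_div_iff₀ (by positivity)]
      nlinarith [mul_le_mul_of_nonneg_left hvar' hσ2pos.le,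
        mul_pos (mul_pos hσ2pos (mul_pos hwpos hwpos)) hε, sq_nonneg (w ^ 2)]
    have h2 : Real.exp (-(a ^ 2) / (2 * σ ^ 2)) ≤ Real.exp (-L) := by
      apply Real.exp_le_exp.mpr
      rw [neg_div]
      linarith
    have h3 : Real.exp (-L) = 2 * δ := by
      rw [hL, Real.exp_neg, Real.exp_log (by positivity), one_div, inv_inv]
    linarith
  set d : ℝ := μ - μ' with hd_def
  have habs : d = w ∨ d = -w := (abs_eq hw0).mp hw
  have hd2 : d ^ 2 = w ^ 2 := by rcases habs with h | h <;> rw [h] <;> ring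
  set B : Set ℝ := {x | c < d * (x - μ)} with hB_def
  have hBmeas : MeasurableSet B :=
    measurableSet_lt measurable_const (by fun_prop)
  clear_value L c a d B
  have hpt : ∀ x ∈ S ∩ Bᶜ, gaussianPDF μ ⟨σ ^ 2, sq_nonneg σ⟩ x ≤
      ENNReal.ofReal (Real.exp ε) * gaussianPDF μ' ⟨σ ^ 2, sq_nonneg σ⟩ x := by
    intro x hx
    have hxB : d * (x - μ) ≤ c := by
      simpa [hB_def, Set.mem_compl_iff, Set.mem_setOf_eq, not_lt] using hx.2
    simp only [gaussianPDF]; rw [← ENNReal.ofReal_mul (Real.exp_pos _).le]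
    apply ENNReal.ofReal_le_ofReal
    simp only [gaussianPDFReal, NNReal.coe_mk]
    have hkey : Real.exp (-(x - μ) ^ 2 / (2 * σ ^ 2)) ≤
        Real.exp ε * Real.exp (-(x - μ') ^ 2 / (2 * σ ^ 2)) := by
      rw [← Real.exp_add]
      apply Real.exp_le_exp.mpr
      rw [show ε + -(x - μ') ^ 2 / (2 * σ ^ 2) = (ε * (2 * σ ^ 2) + -(x - μ') ^ 2) / (2 * σ ^ 2) by
        field_simp]
      rw [div_le_div_iff_of_pos_right (by positivity)]
      have hμ' : μ' = μ - d := by rw [hd_def]; ring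
      rw [hμ']
      have hexpand : (x - (μ - d)) ^ 2 = (x - μ) ^ 2 + 2 * (d * (x - μ)) + d ^ 2 := by ring
      linarith [hxB, hd2, hexpand, hc_def]
    calc (Real.sqrt (2 * π * σ ^ 2))⁻¹ * Real.exp (-(x - μ) ^ 2 / (2 * σ ^ 2))
        ≤ (Real.sqrt (2 * π * σ ^ 2))⁻¹ *
          (Real.exp ε * Real.exp (-(x - μ') ^ 2 / (2 * σ ^ 2))) :=
          mul_le_mul_of_nonneg_left hkey (by positivity)
      _ = Real.exp ε *
          ((Real.sqrt (2 * π * σ ^ 2))⁻¹ * Real.exp (-(x - μ') ^ 2 / (2 * σ ^ 2))) := by ring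
  have h1 : gaussianReal μ ⟨σ ^ 2, sq_nonneg σ⟩ S ≤
      gaussianReal μ ⟨σ ^ 2, sq_nonneg σ⟩ (S ∩ Bᶜ) + gaussianReal μ ⟨σ ^ 2, sq_nonneg σ⟩ B := by
    refine le_trans (measure_mono ?_) (measure_union_le _ _)
    intro x hxS
    by_cases hxB : x ∈ B
    · exact Or.inr hxB
    · exact Or.inl ⟨hxS, hxB⟩
  have h2 : gaussianReal μ ⟨σ ^ 2, sq_nonneg σ⟩ (S ∩ Bᶜ) ≤
      ENNReal.ofReal (Real.exp ε) * gaussianReal μ' ⟨σ ^ 2, sq_nonneg σ⟩ S := by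
    calc gaussianReal μ ⟨σ ^ 2, sq_nonneg σ⟩ (S ∩ Bᶜ)
        = ∫⁻ x in S ∩ Bᶜ, gaussianPDF μ ⟨σ ^ 2, sq_nonneg σ⟩ x := gaussianReal_apply _ hv _
      _ ≤ ∫⁻ x in S ∩ Bᶜ, ENNReal.ofReal (Real.exp ε) * gaussianPDF μ' ⟨σ ^ 2, sq_nonneg σ⟩ x :=
          setLIntegral_mono ((measurable_gaussianPDF _ _).const_mul _) hpt
      _ = ENNReal.ofReal (Real.exp ε) * ∫⁻ x in S ∩ Bᶜ, gaussianPDF μ' ⟨σ ^ 2, sq_nonneg σ⟩ x :=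
          lintegral_const_mul _ (measurable_gaussianPDF _ _)
      _ = ENNReal.ofReal (Real.exp ε) * gaussianReal μ' ⟨σ ^ 2, sq_nonneg σ⟩ (S ∩ Bᶜ) := by
          rw [gaussianReal_apply _ hv]
      _ ≤ ENNReal.ofReal (Real.exp ε) * gaussianReal μ' ⟨σ ^ 2, sq_nonneg σ⟩ S :=
          mul_le_mul_right (measure_mono Set.inter_subset_left) _
  have h3 : gaussianReal μ ⟨σ ^ 2, sq_nonneg σ⟩ B ≤ ENNReal.ofReal δ := by
    have hiff : ∀ y : ℝ, c < w * y ↔ a < y := by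
      intro y
      rw [ha_def, div_lt_iff₀ hwpos, mul_comm]
    rcases habs with hcase | hcase
    · have hBeq : B = Set.Ioi (μ + a) := by
        ext x
        simp only [hB_def, Set.mem_setOf_eq, Set.mem_Ioi, hcase]
        rw [hiff (x - μ)]
        constructor <;> intro h <;> linarith
      rw [hBeq]
      exact le_trans (gauss_tail_Ioi μ a σ hσ ha0 (gauss_Ioi_half _ hv))
        (ENNReal.ofReal_le_ofReal hexp)
    · have hBeq : B = Set.Iio (μ - a) := by
        ext x
        simp only [hB_def, Set.mem_setOf_eq, Set.mem_Iio, hcase]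
        rw [show -w * (x - μ) = w * (μ - x) by ring, hiff (μ - x)]
        constructor <;> intro h <;> linarith
      rw [hBeq]
      refine le_trans (gauss_tail_Iio μ a σ hσ ha0 ?_) (ENNReal.ofReal_le_ofReal hexp)
      rw [gauss_sym _ hv, gauss_Ioi_half _ hv]
  calc gaussianReal μ ⟨σ ^ 2, sq_nonneg σ⟩ S
      ≤ gaussianReal μ ⟨σ ^ 2, sq_nonneg σ⟩ (S ∩ Bᶜ) +
        gaussianReal μ ⟨σ ^ 2, sq_nonneg σ⟩ B := h1
    _ ≤ ENNReal.ofReal (Real.exp ε) * gaussianReal μ' ⟨σ ^ 2, sq_nonneg σ⟩ S +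
        ENNReal.ofReal δ := add_le_add h2 h3
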